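/- (Sakovič) Let Y be a real random variable on a probability space with E(Y²) < ∞, and let θ ∈ ℝ. If E(e^{iθY}) = 0, then θ² · Var(Y) ≥ π²/4. -/

import Mathlib

open MeasureTheory

open Real in

private lemma sinc_aux {z s : ℝ} (hz : 0 ≤ z) (hzs : z ≤ s) (hs : s ≤ π) :
    z * Real.sin s ≤ s * Real.sin z := by
  rcases eq_or_lt_of_le (hz.trans hzs) with heq | hs0
  · have hz0 : z = 0 := le_antisymm (heq ▸ hzs) hz
    simp [hz0, ← heq]
  have h1 : z/s ≤ 1 := (div_le_one hs0).2 hzs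
  have key := strictConcaveOn_sin_Icc.concaveOn.2 (Set.mem_Icc.2 ⟨le_rfl, Real.pi_pos.le⟩)
      (Set.mem_Icc.2 ⟨hz.trans hzs, hs⟩) (show (0:ℝ) ≤ 1 - z/s by linarith) (show (0:ℝ) ≤ z/s by positivity)
      (show 1 - z/s + z/s = 1 by ring)
  simp only [smul_eq_mul, mul_zero, Real.sin_zero, zero_add] at key
  rw [div_mul_cancel₀ _ hs0.ne'] at key
  have := mul_le_mul_of_nonneg_left key hs0.le
  calc z * Real.sin s = s * (z / s * Real.sin s) := by field_simp
    _ ≤ s * Real.sin z := this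

open Real in
private lemma tangent_aux {s : ℝ} (hs0 : 0 < s) (hs : s ≤ π/2) (z : ℝ) :
    Real.cos s + Real.sin s / (2*s) * (s^2 - z^2) ≤ Real.cos z := by
  have hpi : (0:ℝ) < π := Real.pi_pos
  have hsπ : s ≤ π := by linarith
  set c : ℝ := Real.sin s / (2*s) with hc
  set g : ℝ → ℝ := fun x => Real.cos x + c * x^2 with hg
  have hder : ∀ x : ℝ, HasDerivAt g (c*(2*x) - Real.sin x) x := by
    intro x
    have h1 := (Real.hasDerivAt_cos x).add ((hasDerivAt_pow 2 x).const_mul c)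
    exact h1.congr_deriv (by rw [show (2:ℕ) - 1 = 1 from rfl]; push_cast; ring)
  have cont : Continuous g := by
    simp only [hg]; continuity
  have anti : AntitoneOn g (Set.Icc 0 s) := by
    apply antitoneOn_of_deriv_nonpos (convex_Icc 0 s) cont.continuousOn
    · intro x _; exact (hder x).differentiableAt.differentiableWithinAt
    · intro x hx
      rw [interior_Icc] at hx
      rw [(hder x).deriv]
      have := sinc_aux hx.1.le hx.2.le hsπ
      have h2 : c * (2*x) = Real.sin s * x / s := by rw [hc]; field_simp
      rw [h2, sub_nonpos, div_le_iff₀ hs0]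
      nlinarith
  have mono : MonotoneOn g (Set.Ici s) := by
    apply monotoneOn_of_deriv_nonneg (convex_Ici s) cont.continuousOn
    · intro x _; exact (hder x).differentiableAt.differentiableWithinAt
    · intro x hx
      rw [interior_Ici] at hx
      rw [Set.mem_Ioi] at hx
      rw [(hder x).deriv]
      have h2 : c * (2*x) = Real.sin s * x / s := by rw [hc]; field_simp
      rw [h2, sub_nonneg]
      rcases le_or_gt x π with hxπ | hxπ
      · have := sinc_aux hs0.le hx.le hxπ
        rw [le_div_iff₀ hs0]; nlinarith
      · have h3 : 2/π * s ≤ Real.sin s := Real.mul_le_sin hs0.le hs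
        have h4 : Real.sin x ≤ 1 := Real.sin_le_one x
        rw [le_div_iff₀ hs0]
        have h5 : 2/π * s * x ≤ Real.sin s * x := by nlinarith
        have : 2/π * s * x ≥ 2 * s := by
          rw [ge_iff_le, div_mul_eq_mul_div, div_mul_eq_mul_div, le_div_iff₀ hpi]
          nlinarith
        nlinarith
  have key : ∀ z : ℝ, 0 ≤ z → g s ≤ g z := by
    intro z hz
    rcases le_or_gt z s with hzs | hzs
    · exact anti (Set.mem_Icc.2 ⟨hz, hzs⟩) (Set.mem_Icc.2 ⟨hs0.le, le_rfl⟩) hzs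
    · exact mono (Set.mem_Ici.2 le_rfl) (Set.mem_Ici.2 hzs.le) hzs.le
  have key2 : g s ≤ g z := by
    rcases le_or_gt 0 z with hz | hz
    · exact key z hz
    · have := key (-z) (by linarith)
      simpa [hg, Real.cos_neg] using this
  simp only [hg] at key2
  nlinarith [key2]

open Real in
/-- Sakovič, Lemma 1.3.6. If `Y` is a real random variable on a probability
space with `E(Y²) < ∞` and `E(e^{iθY}) = 0` for some `θ ∈ ℝ`, then `θ² Var(Y) ≥ π²/4`. -/
theorem statement3 {Ω : Type*} [MeasurableSpace Ω] (μ : Measure Ω) [IsProbabilityMeasure μ]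
    (Y : Ω → ℝ) (hY : MemLp Y 2 μ) (θ : ℝ)
    (h : (∫ ω, Complex.exp (Complex.I * ((θ * Y ω : ℝ) : ℂ)) ∂μ) = 0) :
    Real.pi ^ 2 / 4 ≤ θ ^ 2 * ProbabilityTheory.variance Y μ := by
  by_contra hlt
  push_neg at hlt
  have hpi : (0:ℝ) < π := Real.pi_pos
  set v : ℝ := θ ^ 2 * ProbabilityTheory.variance Y μ with hv
  have hv0 : 0 ≤ v := mul_nonneg (sq_nonneg θ) (ProbabilityTheory.variance_nonneg Y μ)
  set m : ℝ := ∫ ω, Y ω ∂μ with hm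
  set Z : Ω → ℝ := fun ω => θ * (Y ω - m) with hZ
  have hZmem : MemLp Z 2 μ := (hY.sub (memLp_const m)).const_mul θ
  have hZsq_int : Integrable (fun ω => Z ω ^ 2) μ := hZmem.integrable_sq
  -- ∫ Z² = v
  have hvar : ∫ ω, Z ω ^ 2 ∂μ = v := by
    have h1 : ProbabilityTheory.variance Y μ = ∫ ω, (Y ω - m) ^ 2 ∂μ := by
      rw [ProbabilityTheory.variance_eq_integral hY.aemeasurable]
    have h2 : ∀ ω, Z ω ^ 2 = θ ^ 2 * (Y ω - m) ^ 2 := fun ω => by rw [hZ]; ring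
    simp_rw [h2]
    rw [MeasureTheory.integral_const_mul, hv, h1]
  -- ∫ exp(I Z) = 0
  have hexp_int : Integrable (fun ω => Complex.exp (Complex.I * (Z ω : ℂ))) μ := by
    apply Integrable.mono' (integrable_const (1:ℝ))
    · exact (Complex.continuous_exp.comp
        (continuous_const.mul Complex.continuous_ofReal)).comp_aestronglyMeasurable
        hZmem.aestronglyMeasurable
    · refine ae_of_all _ fun ω => ?_
      rw [mul_comm]
      simp [Complex.norm_exp_ofReal_mul_I]
  have hZexp : ∫ ω, Complex.exp (Complex.I * (Z ω : ℂ)) ∂μ = 0 := by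
    have hpt : ∀ ω, Complex.exp (Complex.I * ((θ * Y ω : ℝ) : ℂ)) =
        Complex.exp (Complex.I * ((θ * m : ℝ) : ℂ)) * Complex.exp (Complex.I * (Z ω : ℂ)) := by
      intro ω
      rw [← Complex.exp_add]
      congr 1
      push_cast [hZ]
      ring
    have := h
    simp_rw [hpt] at this
    rw [MeasureTheory.integral_const_mul] at this
    rcases mul_eq_zero.1 this with h0 | h0
    · exact absurd h0 (Complex.exp_ne_zero _)
    · exact h0
  -- ∫ cos Z = 0
  have hcos_eq : ∀ ω, Real.cos (Z ω) = (Complex.exp (Complex.I * (Z ω : ℂ))).re := by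
    intro ω; rw [mul_comm, Complex.exp_ofReal_mul_I_re]
  have hcos_int : Integrable (fun ω => Real.cos (Z ω)) μ := by
    simp_rw [hcos_eq]
    exact hexp_int.re
  have hcos : ∫ ω, Real.cos (Z ω) ∂μ = 0 := by
    simp_rw [hcos_eq]
    have h2 := integral_re hexp_int
    rw [hZexp] at h2
    simpa using h2
  -- choose s
  set s : ℝ := (Real.sqrt v + π / 2) / 2 with hsdef
  have hsv : Real.sqrt v < π / 2 := by
    have : Real.sqrt v < Real.sqrt (π ^ 2 / 4) := Real.sqrt_lt_sqrt hv0 hlt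
    rwa [show π ^ 2 / 4 = (π/2)^2 by ring, Real.sqrt_sq (by positivity)] at this
  have hs0 : 0 < s := by have := Real.sqrt_nonneg v; rw [hsdef]; linarith
  have hs2 : s < π / 2 := by rw [hsdef]; linarith
  have hvs : v ≤ s ^ 2 := by
    have h1 : Real.sqrt v ≤ s := by rw [hsdef]; linarith [Real.sqrt_nonneg v]
    calc v = Real.sqrt v ^ 2 := (Real.sq_sqrt hv0).symm
      _ ≤ s ^ 2 := by nlinarith [Real.sqrt_nonneg v]
  set c : ℝ := Real.sin s / (2 * s) with hcdef
  have hc0 : 0 ≤ c := by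
    apply div_nonneg _ (by linarith)
    exact Real.sin_nonneg_of_nonneg_of_le_pi hs0.le (by linarith)
  have hlow_int : Integrable (fun ω => Real.cos s + c * (s ^ 2 - Z ω ^ 2)) μ :=
    (integrable_const _).add (((integrable_const (s^2)).sub hZsq_int).const_mul c)
  have hmono : ∫ ω, (Real.cos s + c * (s ^ 2 - Z ω ^ 2)) ∂μ ≤ ∫ ω, Real.cos (Z ω) ∂μ :=
    integral_mono hlow_int hcos_int fun ω => tangent_aux hs0 hs2.le (Z ω)
  have hsub : Integrable (fun ω => s ^ 2 - Z ω ^ 2) μ := (integrable_const (s^2)).sub hZsq_int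
  have hmulint : Integrable (fun ω => c * (s ^ 2 - Z ω ^ 2)) μ := hsub.const_mul c
  have hlhs : ∫ ω, (Real.cos s + c * (s ^ 2 - Z ω ^ 2)) ∂μ = Real.cos s + c * (s ^ 2 - v) := by
    rw [integral_add (integrable_const _) hmulint, integral_const,
      MeasureTheory.integral_const_mul, integral_sub (integrable_const _) hZsq_int,
      integral_const, hvar]
    simp [measure_univ]
  have hcs : 0 < Real.cos s := Real.cos_pos_of_mem_Ioo ⟨by linarith, hs2⟩
  rw [hlhs, hcos] at hmono
  nlinarith
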